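/- arXiv:1204.5813 — 7 statements merged into one kernel-verified Lean document; each statement's English description precedes it below -/
import Mathlib

section
/- For all natural numbers n ≥ 1 and all real x, (1/n(n+1))·(x²-1)·L_n'(x) = (1/(2n+1))·(L_{n+1}(x) - L_{n-1}(x)), where L_n denotes the n-th Legendre polynomial. -/
open Polynomial

noncomputable def legendre : ℕ → Polynomial ℝ
  | 0 => 1
  | 1 => Polynomial.X
  | (n + 2) =>
      Polynomial.C ((2 * (n : ℝ) + 3) / ((n : ℝ) + 2)) * Polynomial.X * legendre (n + 1)
        - Polynomial.C (((n : ℝ) + 1) / ((n : ℝ) + 2)) * legendre n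

lemma eval_rec (n : ℕ) (x : ℝ) :
    (legendre (n + 2)).eval x =
      ((2 * (n : ℝ) + 3) / ((n : ℝ) + 2)) * x * (legendre (n + 1)).eval x
        - (((n : ℝ) + 1) / ((n : ℝ) + 2)) * (legendre n).eval x := by
  simp [legendre]

lemma deval_rec (n : ℕ) (x : ℝ) :
    (derivative (legendre (n + 2))).eval x =
      ((2 * (n : ℝ) + 3) / ((n : ℝ) + 2)) *
          ((legendre (n + 1)).eval x + x * (derivative (legendre (n + 1))).eval x)
        - (((n : ℝ) + 1) / ((n : ℝ) + 2)) * (derivative (legendre n)).eval x := by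
  show (derivative (Polynomial.C ((2 * (n : ℝ) + 3) / ((n : ℝ) + 2)) * Polynomial.X * legendre (n + 1)
        - Polynomial.C (((n : ℝ) + 1) / ((n : ℝ) + 2)) * legendre n)).eval x = _
  simp [derivative_mul]
  ring

lemma rec' (n : ℕ) (x : ℝ) :
    (n : ℝ) * (legendre (n - 1)).eval x =
      (2 * (n : ℝ) + 1) * x * (legendre n).eval x - ((n : ℝ) + 1) * (legendre (n + 1)).eval x := by
  cases n with
  | zero => simp [legendre]
  | succ m =>
    have h := eval_rec m x
    have hm : ((m : ℝ) + 2) ≠ 0 := by positivity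
    simp only [Nat.add_sub_cancel]
    push_cast
    field_simp at h
    linarith [h]

lemma key : ∀ n : ℕ, ∀ x : ℝ,
    (x ^ 2 - 1) * (derivative (legendre n)).eval x =
      (n : ℝ) * (x * (legendre n).eval x - (legendre (n - 1)).eval x) := by
  have H : ∀ n : ℕ, (∀ x : ℝ,
      (x ^ 2 - 1) * (derivative (legendre n)).eval x =
        (n : ℝ) * (x * (legendre n).eval x - (legendre (n - 1)).eval x)) ∧ (∀ x : ℝ,
      (x ^ 2 - 1) * (derivative (legendre (n + 1))).eval x =
        ((n : ℝ) + 1) * (x * (legendre (n + 1)).eval x - (legendre n).eval x)) := by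
    intro n
    induction n with
    | zero =>
      constructor
      · intro x; simp [legendre]
      · intro x; simp [legendre]; ring
    | succ k ih =>
      constructor
      · intro x; simpa using ih.2 x
      intro x
      have h0 := ih.1 x
      have h1 := ih.2 x
      have hr := rec' k x
      have hk : ((k : ℝ) + 2) ≠ 0 := by positivity
      rw [deval_rec, eval_rec]
      push_cast
      field_simp
      linear_combination ((2*(k:ℝ)+3)*x)*h1 - ((k:ℝ)+1)*h0 + ((k:ℝ)+1)*hr
  intro n
  exact (H n).1

theorem stmt_5 (n : ℕ) (hn : 1 ≤ n) (x : ℝ) :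
    (1 / ((n : ℝ) * ((n : ℝ) + 1))) * (x ^ 2 - 1) * ((derivative (legendre n)).eval x) =
      (1 / (2 * (n : ℝ) + 1)) * ((legendre (n + 1)).eval x - (legendre (n - 1)).eval x) := by
  have hk := key n x
  have hr := rec' n x
  have hn0 : (n : ℝ) ≠ 0 := Nat.cast_ne_zero.mpr (by omega)
  have h1 : (n : ℝ) + 1 ≠ 0 := by positivity
  have h2 : 2 * (n : ℝ) + 1 ≠ 0 := by positivity
  field_simp
  nlinarith [hk, hr]
end

section
/- For all natural numbers N ≥ 1, the maximum of |T_{N+1}'(x) + T_N'(x)| over x ∈ [-1,1] equals 2N² + 2N + 1, where T_n is the Chebyshev polynomial of the first kind. -/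
open Polynomial Polynomial.Chebyshev

private lemma abs_sin_nat_mul (n : ℕ) (θ : ℝ) :
    |Real.sin (n * θ)| ≤ n * |Real.sin θ| := by
  induction n with
  | zero => simp
  | succ n ih =>
    have : ((n : ℝ) + 1) * θ = n * θ + θ := by ring
    push_cast
    rw [this, Real.sin_add]
    calc |Real.sin (n * θ) * Real.cos θ + Real.cos (n * θ) * Real.sin θ|
        ≤ |Real.sin (n * θ) * Real.cos θ| + |Real.cos (n * θ) * Real.sin θ| := abs_add_le _ _
      _ ≤ |Real.sin (n * θ)| * 1 + 1 * |Real.sin θ| := by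
          rw [abs_mul, abs_mul]
          gcongr <;> first | exact Real.abs_cos_le_one _
      _ ≤ n * |Real.sin θ| + 1 * |Real.sin θ| := by
          have h0 : (0:ℝ) ≤ |Real.sin θ| := abs_nonneg _
          nlinarith [ih]
      _ = (n + 1) * |Real.sin θ| := by ring

private lemma U_bound (n : ℕ) {x : ℝ} (hx : x ∈ Set.Icc (-1 : ℝ) 1) :
    |(U ℝ (n : ℤ)).eval x| ≤ n + 1 := by
  have hclosed : IsClosed {y : ℝ | |(U ℝ (n : ℤ)).eval y| ≤ n + 1} :=
    isClosed_le (continuous_abs.comp (U ℝ (n : ℤ)).continuous) continuous_const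
  have hIoo : Set.Ioo (-1 : ℝ) 1 ⊆ {y : ℝ | |(U ℝ (n : ℤ)).eval y| ≤ n + 1} := by
    intro y hy
    set θ := Real.arccos y with hθ
    have hcos : Real.cos θ = y := Real.cos_arccos hy.1.le hy.2.le
    have hθpos : 0 < θ := Real.arccos_pos.2 hy.2
    have hθlt : θ < Real.pi := by
      rw [hθ, Real.arccos]
      have := Real.neg_pi_div_two_lt_arcsin.2 hy.1
      linarith
    have hsin : 0 < Real.sin θ := Real.sin_pos_of_pos_of_lt_pi hθpos hθlt
    have key := Polynomial.Chebyshev.U_real_cos θ (n : ℤ)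
    rw [hcos] at key
    push_cast at key
    have h1 : |(U ℝ (n : ℤ)).eval y| * Real.sin θ = |Real.sin (((n : ℝ) + 1) * θ)| := by
      rw [← key, abs_mul, abs_of_pos hsin]
    have h2 : |Real.sin (((n : ℝ) + 1) * θ)| ≤ ((n : ℝ) + 1) * Real.sin θ := by
      have := abs_sin_nat_mul (n + 1) θ
      push_cast at this
      rwa [abs_of_pos hsin] at this
    have := h1.le.trans h2
    exact le_of_mul_le_mul_right this hsin
  have : Set.Icc (-1 : ℝ) 1 ⊆ {y : ℝ | |(U ℝ (n : ℤ)).eval y| ≤ n + 1} := by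
    rw [← closure_Ioo (by norm_num : (-1 : ℝ) ≠ 1)]
    exact closure_minimal hIoo hclosed
  exact this hx

private lemma U_eval_one (n : ℕ) : (U ℝ (n : ℤ)).eval 1 = n + 1 := by
  induction n using Nat.twoStepInduction with
  | zero => simp [Polynomial.Chebyshev.U_zero]
  | one => norm_num [Polynomial.Chebyshev.U_one]
  | more n ih1 ih2 =>
    have h := Polynomial.Chebyshev.U_add_one ℝ ((n : ℤ) + 1)
    have : ((n : ℤ) + 1 + 1) = ((n + 2 : ℕ) : ℤ) := by push_cast; ring
    rw [this] at h
    have h' : ((n : ℤ) + 1 - 1) = (n : ℤ) := by ring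
    rw [h'] at h
    rw [h]
    simp only [Polynomial.eval_sub, Polynomial.eval_mul, Polynomial.eval_ofNat,
      Polynomial.eval_X]
    push_cast at ih1 ih2 ⊢
    rw [ih1, ih2]
    ring

private lemma derivT_eval_one (n : ℕ) :
    (derivative (T ℝ (n : ℤ))).eval 1 = (n : ℝ) ^ 2 := by
  cases n with
  | zero => simp [Polynomial.Chebyshev.T_zero]
  | succ m =>
    rw [Polynomial.Chebyshev.T_derivative_eq_U]
    have h' : ((m + 1 : ℕ) : ℤ) - 1 = (m : ℤ) := by push_cast; ring
    rw [h']
    simp only [Polynomial.eval_mul, Polynomial.eval_intCast]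
    rw [_root_.U_eval_one]
    push_cast
    ring

private lemma derivT_bound (n : ℕ) {x : ℝ} (hx : x ∈ Set.Icc (-1 : ℝ) 1) :
    |(derivative (T ℝ (n : ℤ))).eval x| ≤ (n : ℝ) ^ 2 := by
  cases n with
  | zero => simp [Polynomial.Chebyshev.T_zero]
  | succ m =>
    rw [Polynomial.Chebyshev.T_derivative_eq_U]
    have h' : ((m + 1 : ℕ) : ℤ) - 1 = (m : ℤ) := by push_cast; ring
    rw [h']
    simp only [Polynomial.eval_mul, Polynomial.eval_intCast, abs_mul]
    have := U_bound m hx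
    calc |(((m + 1 : ℕ) : ℤ) : ℝ)| * |(U ℝ (m : ℤ)).eval x|
        ≤ ((m : ℝ) + 1) * ((m : ℝ) + 1) := by
          have hc : |(((m + 1 : ℕ) : ℤ) : ℝ)| = (m : ℝ) + 1 := by
            push_cast
            rw [abs_of_nonneg (by positivity)]
          rw [hc]
          have h0 : (0:ℝ) ≤ (m : ℝ) + 1 := by positivity
          nlinarith [this, abs_nonneg ((U ℝ (m : ℤ)).eval x)]
      _ = ((m + 1 : ℕ) : ℝ) ^ 2 := by push_cast; ring

theorem stmt_10 (N : ℕ) (hN : 1 ≤ N) :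
    IsGreatest
      ((fun x : ℝ =>
        |(derivative (T ℝ (N + 1))).eval x + (derivative (T ℝ N)).eval x|) '' Set.Icc (-1) 1)
      (2 * (N : ℝ) ^ 2 + 2 * (N : ℝ) + 1) := by
  constructor
  · refine ⟨1, by norm_num, ?_⟩
    dsimp only
    have h1 : ((N : ℤ) + 1) = ((N + 1 : ℕ) : ℤ) := by push_cast; ring
    rw [h1, derivT_eval_one (N + 1), derivT_eval_one N]
    rw [abs_of_nonneg (by positivity)]
    push_cast
    ring
  · rintro v ⟨x, hx, rfl⟩
    have h1 : ((N : ℤ) + 1) = ((N + 1 : ℕ) : ℤ) := by push_cast; ring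
    rw [h1]
    calc |(derivative (T ℝ ((N + 1 : ℕ) : ℤ))).eval x + (derivative (T ℝ (N : ℤ))).eval x|
        ≤ |(derivative (T ℝ ((N + 1 : ℕ) : ℤ))).eval x| + |(derivative (T ℝ (N : ℤ))).eval x| :=
          abs_add_le _ _
      _ ≤ ((N + 1 : ℕ) : ℝ) ^ 2 + (N : ℝ) ^ 2 := by
          gcongr
          · exact derivT_bound (N + 1) hx
          · exact derivT_bound N hx
      _ = 2 * (N : ℝ) ^ 2 + 2 * (N : ℝ) + 1 := by push_cast; ring
end

section
/- For all natural numbers N ≥ 1, the maximum of |T_{N+1}''(x) - T_{N-1}''(x)| over x ∈ [-1,1] equals (4/3)·N·(2N²+1), where T_n is the Chebyshev polynomial of the first kind. -/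
open Polynomial Polynomial.Chebyshev

/-- |sin (n θ)| ≤ n |sin θ| -/
lemma aux_sin_bound (θ : ℝ) : ∀ n : ℕ, |Real.sin (n * θ)| ≤ n * |Real.sin θ| := by
  intro n
  induction n with
  | zero => simp
  | succ k ih =>
    have h : Real.sin ((k + 1 : ℕ) * θ) = Real.sin (k * θ) * Real.cos θ +
        Real.cos (k * θ) * Real.sin θ := by
      push_cast; rw [add_mul, one_mul, Real.sin_add]
    have c1 : |Real.sin (k * θ) * Real.cos θ| ≤ |Real.sin (k * θ)| := by
      rw [abs_mul]
      exact mul_le_of_le_one_right (abs_nonneg _) (Real.abs_cos_le_one θ)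
    have c2 : |Real.cos (k * θ) * Real.sin θ| ≤ |Real.sin θ| := by
      rw [abs_mul]
      exact mul_le_of_le_one_left (abs_nonneg _) (Real.abs_cos_le_one _)
    have habs := abs_add_le (Real.sin (k * θ) * Real.cos θ) (Real.cos (k * θ) * Real.sin θ)
    rw [h]
    push_cast
    push_cast at ih
    linarith

lemma aux_U_eval_one : ∀ n : ℕ, ((U ℝ (n : ℤ)).eval 1 = (n : ℝ) + 1) ∧
    ((U ℝ ((n : ℤ) + 1)).eval 1 = (n : ℝ) + 2) := by
  intro n
  induction n with
  | zero =>
    norm_num [U_zero, U_one]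
  | succ k ih =>
    obtain ⟨ih1, ih2⟩ := ih
    constructor
    · push_cast
      rw [ih2]; ring
    · rw [show ((k + 1 : ℕ) : ℤ) + 1 = (k : ℤ) + 2 by push_cast; ring,
        U_add_two]
      simp only [eval_sub, eval_mul, eval_ofNat, eval_X, ih1, ih2]
      push_cast; ring

lemma aux_U_eval_neg_one : ∀ n : ℕ, ((U ℝ (n : ℤ)).eval (-1) = (-1) ^ n * ((n : ℝ) + 1)) ∧
    ((U ℝ ((n : ℤ) + 1)).eval (-1) = (-1) ^ (n + 1) * ((n : ℝ) + 2)) := by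
  intro n
  induction n with
  | zero =>
    norm_num [U_zero, U_one]
  | succ k ih =>
    obtain ⟨ih1, ih2⟩ := ih
    constructor
    · push_cast
      rw [ih2]; ring
    · rw [show ((k + 1 : ℕ) : ℤ) + 1 = (k : ℤ) + 2 by push_cast; ring,
        U_add_two]
      simp only [eval_sub, eval_mul, eval_ofNat, eval_X, ih1, ih2]
      push_cast; ring

/-- |U_n(x)| ≤ n+1 on [-1,1]. -/
lemma aux_U_bound (n : ℕ) (x : ℝ) (hx : x ∈ Set.Icc (-1 : ℝ) 1) :
    |(U ℝ (n : ℤ)).eval x| ≤ (n : ℝ) + 1 := by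
  obtain ⟨hx1, hx2⟩ := hx
  set θ := Real.arccos x with hθ
  have hcos : Real.cos θ = x := Real.cos_arccos hx1 hx2
  by_cases hs : Real.sin θ = 0
  · have hsq : Real.sqrt (1 - x ^ 2) = 0 := by rw [← Real.sin_arccos]; exact hs
    have hnn : (0:ℝ) ≤ 1 - x ^ 2 := by nlinarith
    have h0 : 1 - x ^ 2 = 0 := by
      have h := Real.sq_sqrt hnn
      rw [hsq] at h
      simpa using h.symm
    have hx1' : (1 - x) * (1 + x) = 0 := by nlinarith
    have : x = 1 ∨ x = -1 := by
      rcases mul_eq_zero.mp hx1' with h | h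
      · left; linarith
      · right; linarith
    rcases this with rfl | rfl
    · rw [(aux_U_eval_one n).1, abs_of_nonneg (by positivity)]
    · rw [(aux_U_eval_neg_one n).1, abs_mul, abs_pow, abs_neg, abs_one, one_pow, one_mul,
        abs_of_nonneg (by positivity)]
  · have h := U_real_cos θ (n : ℤ)
    rw [hcos] at h
    have habs : |(U ℝ (n : ℤ)).eval x| * |Real.sin θ| = |Real.sin (((n : ℤ) + 1) * θ)| := by
      rw [← abs_mul, h]
    have hb : |Real.sin (((n : ℤ) + 1) * θ)| ≤ ((n : ℝ) + 1) * |Real.sin θ| := by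
      have h2 := aux_sin_bound θ (n + 1)
      push_cast at h2 ⊢
      convert h2 using 3
    have hspos : 0 < |Real.sin θ| := abs_pos.2 hs
    have hle := habs.trans_le hb
    calc |(U ℝ (n : ℤ)).eval x| = |(U ℝ (n : ℤ)).eval x| * |Real.sin θ| / |Real.sin θ| := by
          field_simp
      _ ≤ ((n : ℝ) + 1) * |Real.sin θ| / |Real.sin θ| := by gcongr
      _ = (n : ℝ) + 1 := by field_simp

/-- recurrence for derivatives of U -/
lemma aux_dU (n : ℤ) : derivative (U ℝ (n + 2)) =
    derivative (U ℝ n) + ((2 * (n + 2) : ℤ) : ℝ[X]) * U ℝ (n + 1) := by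
  have h1 := U_add_two ℝ n
  have h2 := T_eq_U_sub_X_mul_U ℝ (n + 2)
  rw [show (n + 2 - 1 : ℤ) = n + 1 by ring] at h2
  have h : U ℝ (n + 2) = U ℝ n + 2 * T ℝ (n + 2) := by
    linear_combination -h1 - 2 * h2
  rw [h, derivative_add, derivative_mul]
  have h3 := T_derivative_eq_U (R := ℝ) (n + 2)
  rw [show (n + 2 - 1 : ℤ) = n + 1 by ring] at h3
  rw [h3]
  simp only [derivative_ofNat, zero_mul, zero_add]
  push_cast
  ring

lemma aux_dU_eval_one : ∀ n : ℕ, ((derivative (U ℝ (n : ℤ))).eval 1 =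
      (n : ℝ) * ((n : ℝ) + 1) * ((n : ℝ) + 2) / 3) ∧
    ((derivative (U ℝ ((n : ℤ) + 1))).eval 1 =
      ((n : ℝ) + 1) * ((n : ℝ) + 2) * ((n : ℝ) + 3) / 3) := by
  intro n
  induction n with
  | zero =>
    constructor
    · norm_num [U_zero]
    · norm_num [U_one, derivative_mul]
  | succ k ih =>
    obtain ⟨ih1, ih2⟩ := ih
    constructor
    · push_cast
      rw [ih2]; ring
    · rw [show ((k + 1 : ℕ) : ℤ) + 1 = (k : ℤ) + 2 by push_cast; ring, aux_dU]
      rw [eval_add, eval_mul, eval_intCast, ih1, (aux_U_eval_one k).2]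
      push_cast; ring

lemma aux_dU_bound : ∀ n : ℕ, ∀ x ∈ Set.Icc (-1 : ℝ) 1,
    (|(derivative (U ℝ (n : ℤ))).eval x| ≤ (n : ℝ) * ((n : ℝ) + 1) * ((n : ℝ) + 2) / 3) ∧
    (|(derivative (U ℝ ((n : ℤ) + 1))).eval x| ≤
      ((n : ℝ) + 1) * ((n : ℝ) + 2) * ((n : ℝ) + 3) / 3) := by
  intro n
  induction n with
  | zero =>
    intro x hx
    constructor
    · norm_num [U_zero]
    · norm_num [U_one, derivative_mul]
  | succ k ih =>
    intro x hx
    obtain ⟨ih1, ih2⟩ := ih x hx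
    constructor
    · push_cast
      refine ih2.trans (le_of_eq ?_)
      ring
    · rw [show ((k + 1 : ℕ) : ℤ) + 1 = (k : ℤ) + 2 by push_cast; ring, aux_dU]
      rw [eval_add, eval_mul, eval_intCast]
      have hu := aux_U_bound (k + 1) x hx
      rw [show ((k + 1 : ℕ) : ℤ) = (k : ℤ) + 1 by push_cast; ring] at hu
      push_cast
      push_cast at hu
      set a := (derivative (U ℝ (k : ℤ))).eval x
      set b := (U ℝ ((k : ℤ) + 1)).eval x
      have hc : (0:ℝ) ≤ 2 * ((k : ℝ) + 2) := by positivity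
      calc |a + 2 * ((k : ℝ) + 2) * b| ≤ |a| + |2 * ((k : ℝ) + 2) * b| := abs_add_le _ _
        _ = |a| + 2 * ((k : ℝ) + 2) * |b| := by
            rw [abs_mul, abs_of_nonneg hc]
        _ ≤ (k : ℝ) * ((k : ℝ) + 1) * ((k : ℝ) + 2) / 3 +
            2 * ((k : ℝ) + 2) * ((k : ℝ) + 1 + 1) := by gcongr
        _ = ((k : ℝ) + 1 + 1) * ((k : ℝ) + 1 + 2) * ((k : ℝ) + 1 + 3) / 3 := by ring

theorem stmt_12 (N : ℕ) (hN : 1 ≤ N) :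
    IsGreatest
      ((fun x : ℝ =>
        |(derivative (derivative (T ℝ (N + 1)))).eval x -
          (derivative (derivative (T ℝ ((N : ℤ) - 1)))).eval x|) '' Set.Icc (-1) 1)
      ((4 / 3 : ℝ) * (N : ℝ) * (2 * (N : ℝ) ^ 2 + 1)) := by
  have key : ∀ x : ℝ, (derivative (derivative (T ℝ (N + 1)))).eval x -
      (derivative (derivative (T ℝ ((N : ℤ) - 1)))).eval x =
      2 * (derivative (U ℝ ((N : ℤ) - 2))).eval x +
      (2 * (N : ℝ) * ((N : ℝ) + 1)) * (U ℝ ((N : ℤ) - 1)).eval x := by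
    intro x
    have hpoly : derivative (derivative (T ℝ ((N : ℤ) + 1))) -
        derivative (derivative (T ℝ ((N : ℤ) - 1))) =
        2 * derivative (U ℝ ((N : ℤ) - 2)) +
        ((2 * (N : ℤ) * ((N : ℤ) + 1) : ℤ) : ℝ[X]) * U ℝ ((N : ℤ) - 1) := by
      have e1 := T_derivative_eq_U (R := ℝ) ((N : ℤ) + 1)
      have e2 := T_derivative_eq_U (R := ℝ) ((N : ℤ) - 1)
      rw [show ((N : ℤ) + 1 - 1) = (N : ℤ) by ring] at e1
      rw [show ((N : ℤ) - 1 - 1) = (N : ℤ) - 2 by ring] at e2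
      rw [e1, e2, derivative_mul, derivative_mul, derivative_intCast, derivative_intCast]
      have e3 := aux_dU ((N : ℤ) - 2)
      rw [show ((N : ℤ) - 2 + 2) = (N : ℤ) by ring,
        show ((N : ℤ) - 2 + 1) = (N : ℤ) - 1 by ring] at e3
      rw [e3]
      push_cast
      ring
    have h := congrArg (eval x) hpoly
    simp only [eval_sub, eval_add, eval_mul, eval_ofNat, eval_intCast] at h
    push_cast at h
    linarith [h]
  have hB1 : (U ℝ ((N : ℤ) - 1)).eval 1 = (N : ℝ) := by
    have h := (aux_U_eval_one (N - 1)).1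
    rw [show (((N - 1 : ℕ)) : ℤ) = (N : ℤ) - 1 by omega] at h
    rw [h, Nat.cast_sub hN]
    push_cast; ring
  have hB : ∀ x ∈ Set.Icc (-1 : ℝ) 1, |(U ℝ ((N : ℤ) - 1)).eval x| ≤ (N : ℝ) := by
    intro x hx
    have h := aux_U_bound (N - 1) x hx
    rw [show (((N - 1 : ℕ)) : ℤ) = (N : ℤ) - 1 by omega, Nat.cast_sub hN] at h
    push_cast at h
    linarith
  have hA1 : (derivative (U ℝ ((N : ℤ) - 2))).eval 1 =
      ((N : ℝ) - 2) * ((N : ℝ) - 1) * (N : ℝ) / 3 := by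
    rcases eq_or_lt_of_le hN with h1 | h2
    · rw [show ((N : ℤ) - 2) = -1 by omega, U_neg_one]
      simp only [derivative_zero, eval_zero]
      rw [show (N : ℝ) = 1 by exact_mod_cast congrArg Nat.cast h1.symm]
      ring
    · have hN2 : 2 ≤ N := h2
      have h := (aux_dU_eval_one (N - 2)).1
      rw [show (((N - 2 : ℕ)) : ℤ) = (N : ℤ) - 2 by omega] at h
      rw [h, Nat.cast_sub hN2]
      push_cast; ring
  have hA : ∀ x ∈ Set.Icc (-1 : ℝ) 1, |(derivative (U ℝ ((N : ℤ) - 2))).eval x| ≤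
      ((N : ℝ) - 2) * ((N : ℝ) - 1) * (N : ℝ) / 3 := by
    intro x hx
    rcases eq_or_lt_of_le hN with h1 | h2
    · rw [show ((N : ℤ) - 2) = -1 by omega, U_neg_one]
      simp only [derivative_zero, eval_zero, abs_zero]
      rw [show (N : ℝ) = 1 by exact_mod_cast congrArg Nat.cast h1.symm]
      norm_num
    · have hN2 : 2 ≤ N := h2
      have h := (aux_dU_bound (N - 2) x hx).1
      rw [show (((N - 2 : ℕ)) : ℤ) = (N : ℤ) - 2 by omega, Nat.cast_sub hN2] at h
      push_cast at h
      linarith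
  have hval : 2 * (((N : ℝ) - 2) * ((N : ℝ) - 1) * (N : ℝ) / 3) +
      (2 * (N : ℝ) * ((N : ℝ) + 1)) * (N : ℝ) =
      (4 / 3 : ℝ) * (N : ℝ) * (2 * (N : ℝ) ^ 2 + 1) := by ring
  constructor
  · refine ⟨1, Set.mem_Icc.mpr ⟨by norm_num, le_refl 1⟩, ?_⟩
    simp only
    rw [key 1, hA1, hB1, hval, abs_of_nonneg (by positivity)]
  · rintro y ⟨x, hx, rfl⟩
    simp only
    rw [key x]
    have h1 := hA x hx
    have h2 := hB x hx
    have hc : (0 : ℝ) ≤ 2 * (N : ℝ) * ((N : ℝ) + 1) := by positivity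
    have h3 : 2 * (N : ℝ) * ((N : ℝ) + 1) * |(U ℝ ((N : ℤ) - 1)).eval x| ≤
        2 * (N : ℝ) * ((N : ℝ) + 1) * (N : ℝ) := mul_le_mul_of_nonneg_left h2 hc
    have h4 := abs_add_le (2 * (derivative (U ℝ ((N : ℤ) - 2))).eval x)
      (2 * (N : ℝ) * ((N : ℝ) + 1) * (U ℝ ((N : ℤ) - 1)).eval x)
    rw [abs_mul, abs_mul (2 * (N : ℝ) * ((N : ℝ) + 1)), abs_of_nonneg hc,
      abs_of_nonneg (by norm_num : (0:ℝ) ≤ (2:ℝ))] at h4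
    linarith
end

section
/- Let ρ > 1 and z = (ρe^{iθ} + ρ^{-1}e^{-iθ})/2 be on the Bernstein ellipse E_ρ. Then |T_{N+1}(z) - T_{N-1}(z)| = (1/2)·√(ρ² + ρ^{-2} - 2cos 2θ)·√(ρ^{2N} + ρ^{-2N} - 2cos 2Nθ). -/
open Polynomial Polynomial.Chebyshev

lemma aux_abs (ρ θ : ℝ) (hρ : 0 < ρ) :
    ‖(ρ : ℂ) * Complex.exp (θ * Complex.I) -
      (ρ : ℂ)⁻¹ * Complex.exp (-(θ * Complex.I))‖ =
      Real.sqrt (ρ ^ 2 + ρ⁻¹ ^ 2 - 2 * Real.cos (2 * θ)) := by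
  have hρ' : (ρ : ℂ) ≠ 0 := by exact_mod_cast hρ.ne'
  rw [Complex.norm_def, Complex.normSq_sub]
  congr 1
  have h1 : Complex.normSq ((ρ : ℂ) * Complex.exp (θ * Complex.I)) = ρ ^ 2 := by
    rw [← Complex.sq_norm, norm_mul, Complex.norm_exp_ofReal_mul_I, Complex.norm_real,
      Real.norm_of_nonneg hρ.le, mul_one]
  have h2 : Complex.normSq ((ρ : ℂ)⁻¹ * Complex.exp (-(θ * Complex.I))) = ρ⁻¹ ^ 2 := by
    rw [← Complex.sq_norm, norm_mul, norm_inv]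
    rw [show -((θ:ℂ) * Complex.I) = ((-θ : ℝ):ℂ) * Complex.I by push_cast; ring,
      Complex.norm_exp_ofReal_mul_I, Complex.norm_real, Real.norm_of_nonneg hρ.le, mul_one]
  have h3 : ((ρ : ℂ) * Complex.exp (θ * Complex.I) *
      (starRingEnd ℂ) ((ρ : ℂ)⁻¹ * Complex.exp (-(θ * Complex.I)))).re = Real.cos (2 * θ) := by
    rw [map_mul, ← Complex.exp_conj]
    have : (starRingEnd ℂ) (-((θ:ℂ) * Complex.I)) = θ * Complex.I := by
      simp [Complex.conj_I]
    rw [this, map_inv₀, Complex.conj_ofReal]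
    rw [show (ρ:ℂ) * Complex.exp (θ * Complex.I) * ((ρ:ℂ)⁻¹ * Complex.exp (θ * Complex.I)) =
      ((ρ:ℂ) * (ρ:ℂ)⁻¹) * (Complex.exp (θ * Complex.I) * Complex.exp (θ * Complex.I)) by push_cast; ring,
      mul_inv_cancel₀ hρ', one_mul, ← Complex.exp_add,
      show (θ:ℂ) * Complex.I + θ * Complex.I = ((2*θ : ℝ):ℂ) * Complex.I by push_cast; ring,
      Complex.exp_ofReal_mul_I_re]
  rw [h1, h2, h3]

theorem stmt_14 (N : ℕ) (hN : 1 ≤ N) (ρ θ : ℝ) (hρ : 1 < ρ) (z : ℂ)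
    (hz : z = ((ρ : ℂ) * Complex.exp (θ * Complex.I) +
      (ρ : ℂ)⁻¹ * Complex.exp (-(θ * Complex.I))) / 2) :
    ‖(T ℂ (N + 1)).eval z - (T ℂ ((N : ℤ) - 1)).eval z‖ =
      (1 / 2) * Real.sqrt (ρ ^ 2 + ρ⁻¹ ^ 2 - 2 * Real.cos (2 * θ)) *
        Real.sqrt (ρ ^ (2 * N) + ρ⁻¹ ^ (2 * N) - 2 * Real.cos (2 * (N : ℝ) * θ)) := by
  have hρ0 : (0 : ℝ) < ρ := lt_trans one_pos hρ
  set u : ℂ := (θ : ℂ) - Real.log ρ * Complex.I with hu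
  have hexpI : Complex.exp (u * Complex.I) = (ρ : ℂ) * Complex.exp (θ * Complex.I) := by
    rw [show u * Complex.I = (Real.log ρ : ℂ) + θ * Complex.I by
      rw [hu]; linear_combination (-(Real.log ρ : ℂ)) * Complex.I_sq]
    rw [Complex.exp_add, ← Complex.ofReal_exp, Real.exp_log hρ0]
  have hexpnI : Complex.exp (-(u * Complex.I)) = (ρ : ℂ)⁻¹ * Complex.exp (-(θ * Complex.I)) := by
    rw [Complex.exp_neg, hexpI, mul_inv, ← Complex.exp_neg]
  have hzcos : z = Complex.cos u := by
    rw [hz, Complex.cos, neg_mul, hexpI, hexpnI]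
    try ring
  have e1 : (T ℂ (N + 1)).eval z = Complex.cos ((((N : ℤ) + 1 : ℤ) : ℂ) * u) := by
    rw [hzcos, Polynomial.Chebyshev.T_complex_cos]
  have e2 : (T ℂ ((N : ℤ) - 1)).eval z = Complex.cos ((((N : ℤ) - 1 : ℤ) : ℂ) * u) := by
    rw [hzcos, Polynomial.Chebyshev.T_complex_cos]
  rw [e1, e2, Complex.cos_sub_cos]
  rw [show (((N : ℤ) + 1 : ℤ) : ℂ) * u + (((N : ℤ) - 1 : ℤ) : ℂ) * u = 2 * ((N : ℂ) * u) by
    push_cast; ring]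
  rw [show (((N : ℤ) + 1 : ℤ) : ℂ) * u - (((N : ℤ) - 1 : ℤ) : ℂ) * u = 2 * u by push_cast; ring]
  rw [mul_div_cancel_left₀ _ (two_ne_zero), mul_div_cancel_left₀ _ (two_ne_zero)]
  have hsin : ∀ v : ℂ, ‖Complex.sin v‖ =
      ‖Complex.exp (v * Complex.I) - Complex.exp (-(v * Complex.I))‖ / 2 := by
    intro v
    rw [Complex.sin, neg_mul]
    rw [norm_div, norm_mul, Complex.norm_I, Complex.norm_two, mul_one, norm_sub_rev]
  have habs1 : ‖Complex.sin u‖ =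
      Real.sqrt (ρ ^ 2 + ρ⁻¹ ^ 2 - 2 * Real.cos (2 * θ)) / 2 := by
    rw [hsin u, hexpI, hexpnI, aux_abs ρ θ hρ0]
  have hexpNI : Complex.exp ((N : ℂ) * u * Complex.I) =
      ((ρ ^ N : ℝ) : ℂ) * Complex.exp (((N : ℝ) * θ : ℝ) * Complex.I) := by
    rw [show (N : ℂ) * u * Complex.I = (N : ℕ) * (u * Complex.I) by push_cast; ring,
      Complex.exp_nat_mul, hexpI, mul_pow, ← Complex.exp_nat_mul]
    push_cast
    ring_nf
  have hexpNnI : Complex.exp (-((N : ℂ) * u * Complex.I)) =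
      ((ρ ^ N : ℝ) : ℂ)⁻¹ * Complex.exp (-(((N : ℝ) * θ : ℝ) * Complex.I)) := by
    rw [Complex.exp_neg, hexpNI, mul_inv, ← Complex.exp_neg]
  have habs2 : ‖Complex.sin ((N : ℂ) * u)‖ =
      Real.sqrt (ρ ^ (2 * N) + ρ⁻¹ ^ (2 * N) - 2 * Real.cos (2 * (N : ℝ) * θ)) / 2 := by
    rw [hsin, hexpNI, hexpNnI, aux_abs (ρ ^ N) ((N : ℝ) * θ) (pow_pos hρ0 N),
      show ((ρ:ℝ)^N)^2 = ρ^(2*N) by rw [← pow_mul, mul_comm N 2],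
      show ((ρ:ℝ)^N)⁻¹^2 = ρ⁻¹^(2*N) by rw [inv_pow, ← pow_mul, mul_comm N 2, ← inv_pow],
      show 2*((N:ℝ)*θ) = 2*(N:ℝ)*θ by ring]
  rw [norm_mul, norm_mul, habs1, habs2,
    show ‖(-2 : ℂ)‖ = 2 by simp]
  ring
end

section
/- For all ρ > 1, natural numbers N ≥ 1, and points z on the Bernstein ellipse E_ρ, we have |T_{N+1}(z) - T_{N-1}(z)| ≥ (1/2)·(ρ - ρ^{-1})·(ρ^N - ρ^{-N}). -/
open Polynomial Polynomial.Chebyshev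

lemma abs_sinh_le_abs_sin (x y : ℝ) :
    |Real.sinh y| ≤ ‖Complex.sin (x + y * Complex.I)‖ := by
  have h : Complex.sin (x + y * Complex.I) =
      (Real.sin x * Real.cosh y : ℝ) + (Real.cos x * Real.sinh y : ℝ) * Complex.I := by
    rw [Complex.sin_add_mul_I]
    push_cast
    ring
  have hsq : (‖Complex.sin (x + y * Complex.I)‖)^2 =
      (Real.sin x * Real.cosh y)^2 + (Real.cos x * Real.sinh y)^2 := by
    rw [Complex.sq_norm, h, Complex.normSq_add_mul_I]
  have h1 := Real.sin_sq_add_cos_sq x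
  have h2 := Real.cosh_sq y
  have h3 : (Real.sinh y)^2 ≤ (‖Complex.sin (x + y * Complex.I)‖)^2 := by
    rw [hsq]; nlinarith [sq_nonneg (Real.sin x * Real.sinh y)]
  calc |Real.sinh y| = Real.sqrt ((Real.sinh y)^2) := (Real.sqrt_sq_eq_abs _).symm
    _ ≤ Real.sqrt ((‖Complex.sin (x + y * Complex.I)‖)^2) := Real.sqrt_le_sqrt h3
    _ = ‖Complex.sin (x + y * Complex.I)‖ := Real.sqrt_sq (norm_nonneg _)

theorem stmt_16 (N : ℕ) (hN : 1 ≤ N) (ρ : ℝ) (hρ : 1 < ρ) (z : ℂ)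
    (hz : ∃ θ ∈ Set.Icc (0 : ℝ) (2 * Real.pi),
      z = ((ρ : ℂ) * Complex.exp (θ * Complex.I) +
        (ρ : ℂ)⁻¹ * Complex.exp (-(θ * Complex.I))) / 2) :
    (1 / 2) * (ρ - ρ⁻¹) * (ρ ^ N - ρ⁻¹ ^ N) ≤
      ‖(T ℂ (N + 1)).eval z - (T ℂ ((N : ℤ) - 1)).eval z‖ := by
  obtain ⟨θ, hθ, hzeq⟩ := hz
  have hρ0 : (0:ℝ) < ρ := lt_trans one_pos hρ
  set L := Real.log ρ with hLdef
  have hL : 0 < L := Real.log_pos hρ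
  have hexpL : Real.exp L = ρ := Real.exp_log hρ0
  set u : ℂ := (θ : ℂ) + ((-L : ℝ) : ℂ) * Complex.I with hu
  have hexp1 : Complex.exp (u * Complex.I) = (ρ : ℂ) * Complex.exp (θ * Complex.I) := by
    have h : u * Complex.I = (θ : ℂ) * Complex.I + ((L : ℝ) : ℂ) := by
      rw [hu]; push_cast; ring_nf; rw [Complex.I_sq]; ring
    rw [h, Complex.exp_add, ← Complex.ofReal_exp, hexpL]
    ring
  have hexp2 : Complex.exp (-(u * Complex.I)) = (ρ : ℂ)⁻¹ * Complex.exp (-(θ * Complex.I)) := by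
    have h : -(u * Complex.I) = -((θ : ℂ) * Complex.I) + ((-L : ℝ) : ℂ) := by
      rw [hu]; push_cast; ring_nf; rw [Complex.I_sq]; ring
    rw [h, Complex.exp_add, ← Complex.ofReal_exp, Real.exp_neg, hexpL]
    push_cast
    ring
  have hzcos : z = Complex.cos u := by
    rw [hzeq, Complex.cos, hexp1, neg_mul, hexp2]
  have hT1 : (T ℂ (N + 1)).eval z = Complex.cos (((N : ℂ) + 1) * u) := by
    rw [hzcos, T_complex_cos]
    push_cast
    ring_nf
  have hT2 : (T ℂ ((N : ℤ) - 1)).eval z = Complex.cos (((N : ℂ) - 1) * u) := by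
    rw [hzcos, T_complex_cos]
    push_cast
    ring_nf
  have hdiff : (T ℂ (N + 1)).eval z - (T ℂ ((N : ℤ) - 1)).eval z =
      -2 * Complex.sin ((N : ℂ) * u) * Complex.sin u := by
    rw [hT1, hT2, Complex.cos_sub_cos]
    push_cast
    ring_nf
  rw [hdiff]
  have habs : ‖-2 * Complex.sin ((N : ℂ) * u) * Complex.sin u‖ =
      2 * ‖Complex.sin ((N : ℂ) * u)‖ * ‖Complex.sin u‖ := by
    rw [norm_mul, norm_mul]
    simp
  rw [habs]
  -- bounds
  have hsinhL : Real.sinh L = (ρ - ρ⁻¹) / 2 := by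
    rw [Real.sinh_eq, hexpL, Real.exp_neg, hexpL]
  have hb1 : (ρ - ρ⁻¹) / 2 ≤ ‖Complex.sin u‖ := by
    have h := abs_sinh_le_abs_sin θ (-L)
    rw [Real.sinh_neg, abs_neg] at h
    calc (ρ - ρ⁻¹) / 2 = Real.sinh L := hsinhL.symm
      _ ≤ |Real.sinh L| := le_abs_self _
      _ ≤ _ := h
  have hNu : (N : ℂ) * u = ((N * θ : ℝ) : ℂ) + ((-(N * L) : ℝ) : ℂ) * Complex.I := by
    rw [hu]; push_cast; ring
  have he : Real.exp ((N : ℝ) * L) = ρ ^ N := by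
    rw [Real.exp_nat_mul, hexpL]
  have hsinhNL : Real.sinh ((N : ℝ) * L) = (ρ ^ N - ρ⁻¹ ^ N) / 2 := by
    rw [Real.sinh_eq, he, Real.exp_neg, he, inv_pow]
  have hb2 : (ρ ^ N - ρ⁻¹ ^ N) / 2 ≤ ‖Complex.sin ((N : ℂ) * u)‖ := by
    have h := abs_sinh_le_abs_sin (N * θ) (-(N * L))
    rw [← hNu, Real.sinh_neg, abs_neg] at h
    calc (ρ ^ N - ρ⁻¹ ^ N) / 2 = Real.sinh ((N : ℝ) * L) := hsinhNL.symm
      _ ≤ |Real.sinh ((N : ℝ) * L)| := le_abs_self _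
      _ ≤ _ := h
  have h01 : (0:ℝ) ≤ (ρ - ρ⁻¹) / 2 := by
    have : ρ⁻¹ ≤ 1 := by rw [inv_le_one_iff₀]; right; exact le_of_lt hρ
    linarith
  have h02 : (0:ℝ) ≤ (ρ ^ N - ρ⁻¹ ^ N) / 2 := by
    have h1 : ρ⁻¹ ^ N ≤ 1 := by
      apply pow_le_one₀ (by positivity)
      rw [inv_le_one_iff₀]; right; exact le_of_lt hρ
    have h2 : (1:ℝ) ≤ ρ ^ N := one_le_pow₀ (le_of_lt hρ)
    linarith
  nlinarith [hb1, hb2, h01, h02, norm_nonneg (Complex.sin u),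
    norm_nonneg (Complex.sin ((N : ℂ) * u))]
end

section
/- Let N ≥ 2 and let u ∈ P_{N+1} and u_N ∈ P_N be real polynomials such that u_N(-1) = u(-1) and u_N'(x_k) = u'(x_k) at all N roots x_k of the Legendre polynomial L_N. Then there exists a constant c such that u(x) - u_N(x) = c·(L_{N+1}(x) - L_{N-1}(x))/(2N+1) = c·(x²-1)·L_N'(x)/(N(N+1)) for all x. -/
open Polynomial

lemma two_step {P : ℕ → Prop} (h0 : P 0) (h1 : P 1)
    (h : ∀ n, P n → P (n+1) → P (n+2)) : ∀ n, P n := by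
  have key : ∀ n, P n ∧ P (n+1) := by
    intro n; induction n with
    | zero => exact ⟨h0, h1⟩
    | succ k ih => exact ⟨ih.2, h k ih.1 ih.2⟩
  exact fun n => (key n).1

lemma legendre_def2 (n : ℕ) : legendre (n+2) =
    C ((2 * (n : ℝ) + 3) / ((n : ℝ) + 2)) * X * legendre (n + 1)
      - C (((n : ℝ) + 1) / ((n : ℝ) + 2)) * legendre n := rfl

lemma legendre_rec (n : ℕ) : C ((n : ℝ) + 2) * legendre (n+2) =
    C (2 * (n : ℝ) + 3) * (X * legendre (n + 1)) - C ((n : ℝ) + 1) * legendre n := by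
  have h2 : ((n : ℝ) + 2) ≠ 0 := by positivity
  rw [legendre_def2, mul_sub]
  congr 1
  · rw [← mul_assoc, ← mul_assoc, ← map_mul, mul_div_cancel₀ _ h2, mul_assoc]
  · rw [← mul_assoc, ← map_mul, mul_div_cancel₀ _ h2]

lemma legendre_deg_lc : ∀ n : ℕ, (legendre n).natDegree = n ∧ 0 < (legendre n).leadingCoeff := by
  apply two_step
  · simp [legendre]
  · simp [legendre]
  · intro n ⟨hdn, hln⟩ ⟨hd1, hl1⟩
    have h2 : (0:ℝ) < (n : ℝ) + 2 := by positivity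
    have ha : (0:ℝ) < (2 * (n : ℝ) + 3) / ((n : ℝ) + 2) := by positivity
    have hp1 : legendre (n+1) ≠ 0 := leadingCoeff_ne_zero.mp hl1.ne'
    have hdeg1 : (C ((2 * (n : ℝ) + 3) / ((n : ℝ) + 2)) * X * legendre (n + 1)).natDegree = n + 2 := by
      rw [mul_assoc, natDegree_C_mul ha.ne', natDegree_X_mul hp1, hd1]
    have hdeg2 : (C (((n : ℝ) + 1) / ((n : ℝ) + 2)) * legendre n).natDegree < n + 2 := by
      calc (C (((n : ℝ) + 1) / ((n : ℝ) + 2)) * legendre n).natDegree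
          ≤ (legendre n).natDegree := natDegree_C_mul_le _ _
        _ < n + 2 := by omega
    have hdlt : (C (((n : ℝ) + 1) / ((n : ℝ) + 2)) * legendre n).degree
        < (C ((2 * (n : ℝ) + 3) / ((n : ℝ) + 2)) * X * legendre (n + 1)).degree := by
      apply degree_lt_degree; omega
    constructor
    · rw [legendre_def2, natDegree_sub_eq_left_of_natDegree_lt (by omega), hdeg1]
    · rw [legendre_def2, leadingCoeff_sub_of_degree_lt hdlt, mul_assoc,
        leadingCoeff_mul, leadingCoeff_mul, leadingCoeff_C, leadingCoeff_X, one_mul]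
      exact mul_pos ha hl1

lemma legendre_natDegree (n : ℕ) : (legendre n).natDegree = n := (legendre_deg_lc n).1
lemma legendre_lc_pos (n : ℕ) : 0 < (legendre n).leadingCoeff := (legendre_deg_lc n).2
lemma legendre_ne_zero (n : ℕ) : legendre n ≠ 0 :=
  leadingCoeff_ne_zero.mp (legendre_lc_pos n).ne'

lemma legendre_eval_one : ∀ n, (legendre n).eval 1 = 1 := by
  apply two_step
  · simp [legendre]
  · simp [legendre]
  · intro n h1 h2
    have hn : ((n : ℝ) + 2) ≠ 0 := by positivity
    rw [legendre_def2]
    simp only [eval_sub, eval_mul, eval_C, eval_X, h1, h2]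
    field_simp
    ring

lemma legendre_eval_neg_one : ∀ n, (legendre n).eval (-1) = (-1)^n := by
  apply two_step
  · simp [legendre]
  · simp [legendre]
  · intro n h1 h2
    have hn : ((n : ℝ) + 2) ≠ 0 := by positivity
    rw [legendre_def2]
    simp only [eval_sub, eval_mul, eval_C, eval_X, h1, h2, pow_succ]
    field_simp
    ring

lemma legendre_ABC : ∀ n : ℕ,
    (derivative (legendre (n+1)) = X * derivative (legendre n) + C ((n:ℝ)+1) * legendre n) ∧
    (X * derivative (legendre (n+1)) - derivative (legendre n) = C ((n:ℝ)+1) * legendre (n+1)) ∧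
    ((X^2 - 1) * derivative (legendre (n+1)) = C ((n:ℝ)+1) * (X * legendre (n+1) - legendre n)) := by
  intro n
  induction n with
  | zero =>
    refine ⟨?_, ?_, ?_⟩ <;>
      · show _ = _
        simp [legendre]
        try ring
  | succ n ih =>
    obtain ⟨hA, hB, hC⟩ := ih
    have hCne : (C ((n:ℝ)+2) : Polynomial ℝ) ≠ 0 := by
      simp only [ne_eq, C_eq_zero]; positivity
    have hdrec := congrArg derivative (legendre_rec n)
    simp only [derivative_mul, derivative_sub, derivative_C, derivative_X, zero_mul, zero_add,
      one_mul] at hdrec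
    have hrec := legendre_rec n
    have hA1 : derivative (legendre (n+2)) =
        X * derivative (legendre (n+1)) + C ((n:ℝ)+1+1) * legendre (n+1) := by
      apply mul_left_cancel₀ hCne
      simp only [map_add, map_mul, map_ofNat, map_one] at hdrec hB ⊢
      linear_combination hdrec + ((C (n:ℝ) : Polynomial ℝ) + 1) * hB
    have hB1 : X * derivative (legendre (n+2)) - derivative (legendre (n+1)) =
        C ((n:ℝ)+1+1) * legendre (n+2) := by
      simp only [map_add, map_mul, map_ofNat, map_one] at hA1 hC hrec ⊢
      linear_combination X * hA1 + hC - hrec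
    have hC1 : (X^2 - 1) * derivative (legendre (n+2)) =
        C ((n:ℝ)+1+1) * (X * legendre (n+2) - legendre (n+1)) := by
      simp only [map_add, map_mul, map_ofNat, map_one] at hA1 hB1 ⊢
      linear_combination X * hB1 - hA1
    refine ⟨?_, ?_, ?_⟩ <;> · push_cast; assumption

lemma legendre_deriv_diff (n : ℕ) :
    derivative (legendre (n+2)) - derivative (legendre n) = C (2*(n:ℝ)+3) * legendre (n+1) := by
  have hA1 := (legendre_ABC (n+1)).1
  have hB := (legendre_ABC n).2.1
  push_cast at hA1
  simp only [map_add, map_mul, map_ofNat, map_one] at hA1 hB ⊢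
  linear_combination hA1 + hB

lemma legendre_xsq (n : ℕ) :
    C (2*(n:ℝ)+3) * ((X^2 - 1) * derivative (legendre (n+1))) =
      C (((n:ℝ)+1) * ((n:ℝ)+2)) * (legendre (n+2) - legendre n) := by
  have hC := (legendre_ABC n).2.2
  have hrec := legendre_rec n
  simp only [map_add, map_mul, map_ofNat, map_one] at hC hrec ⊢
  linear_combination (2 * (C (n:ℝ) : Polynomial ℝ) + 3) * hC - ((C (n:ℝ) : Polynomial ℝ) + 1) * hrec

lemma exists_root_between (p : Polynomial ℝ) {a b : ℝ} (hab : a < b)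
    (h : p.eval a * p.eval b < 0) : ∃ c, a < c ∧ c < b ∧ p.eval c = 0 := by
  have hc : ContinuousOn (fun t => p.eval t) (Set.uIcc a b) := (p.continuous_aeval).continuousOn
  rcases lt_or_ge (p.eval a) 0 with ha | ha
  · have hb : 0 < p.eval b := by nlinarith
    have := intermediate_value_Ioo hab.le ((p.continuous_aeval).continuousOn)
    have h0 : (0:ℝ) ∈ Set.Ioo (p.eval a) (p.eval b) := ⟨ha, hb⟩
    obtain ⟨c, hc1, hc2⟩ := this h0
    exact ⟨c, hc1.1, hc1.2, hc2⟩
  · have ha' : 0 < p.eval a := by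
      rcases ha.lt_or_eq with h' | h'
      · exact h'
      · exfalso; rw [← h'] at h; simp at h
    have hb : p.eval b < 0 := by nlinarith
    have := intermediate_value_Ioo' hab.le ((p.continuous_aeval).continuousOn)
    have h0 : (0:ℝ) ∈ Set.Ioo (p.eval b) (p.eval a) := ⟨hb, ha'⟩
    obtain ⟨c, hc1, hc2⟩ := this h0
    exact ⟨c, hc1.1, hc1.2, hc2⟩

lemma sign_mul_neg {k : ℕ} {u v : ℝ} (h1 : 0 < (-1:ℝ)^k * u) (h2 : 0 < (-1:ℝ)^(k+1) * v) :
    u * v < 0 := by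
  have h3 := mul_pos h1 h2
  have e : ((-1:ℝ)^k * u) * ((-1:ℝ)^(k+1) * v) = -((((-1:ℝ)^k)^2) * (u*v)) := by
    rw [pow_succ]; ring
  have e2 : ((-1:ℝ)^k)^2 = 1 := by
    rw [← pow_mul, mul_comm, pow_mul]; norm_num
  rw [e, e2, one_mul] at h3
  linarith

lemma eq_prod_of_roots {p : Polynomial ℝ} {m : ℕ} (hp : p ≠ 0) (hdeg : p.natDegree = m)
    (x : ℕ → ℝ) (hmono : ∀ i j, i < j → j < m → x i < x j)
    (hroot : ∀ i < m, p.eval (x i) = 0) :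
    p = C p.leadingCoeff * ∏ i ∈ Finset.range m, (X - C (x i)) := by
  have hmonic : (∏ i ∈ Finset.range m, (X - C (x i))).Monic :=
    monic_prod_of_monic _ _ (fun i _ => monic_X_sub_C (x i))
  have hqdeg : (∏ i ∈ Finset.range m, (X - C (x i))).natDegree = m := by
    rw [natDegree_prod_of_monic _ _ (fun i _ => monic_X_sub_C (x i))]
    simp [natDegree_X_sub_C]
  set q : Polynomial ℝ := C p.leadingCoeff * ∏ i ∈ Finset.range m, (X - C (x i)) with hq
  have hlc : p.leadingCoeff ≠ 0 := leadingCoeff_ne_zero.mpr hp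
  have hqdeg' : q.natDegree = m := by rw [hq, natDegree_C_mul hlc, hqdeg]
  have hqlc : q.leadingCoeff = p.leadingCoeff := by
    rw [hq, leadingCoeff_mul, leadingCoeff_C, hmonic.leadingCoeff, mul_one]
  have hinj : Set.InjOn x (Finset.range m : Set ℕ) := by
    intro i hi j hj hij
    by_contra hne
    rcases lt_or_gt_of_ne hne with h | h
    · exact absurd hij (hmono i j h (by simpa using hj)).ne
    · exact absurd hij.symm (hmono j i h (by simpa using hi)).ne
  have hcard : ((Finset.range m).image x).card = m := by
    rw [Finset.card_image_of_injOn (by simpa using hinj), Finset.card_range]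
  have hr : p - q = 0 := by
    rcases eq_or_ne (p - q) 0 with h | h
    · exact h
    apply eq_zero_of_natDegree_lt_card_of_eval_eq_zero' _ ((Finset.range m).image x)
    · intro t ht
      obtain ⟨i, hi, rfl⟩ := Finset.mem_image.mp ht
      rw [eval_sub, hroot i (Finset.mem_range.mp hi), hq]
      simp only [eval_mul, eval_C, eval_prod, eval_sub, eval_X]
      rw [Finset.prod_eq_zero hi (by simp), mul_zero, sub_zero]
    · rw [hcard]
      have hle : (p - q).natDegree ≤ m :=
        le_trans (natDegree_sub_le p q) (by omega)
      rcases hle.lt_or_eq with h' | h'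
      · exact h'
      exfalso
      have hc : (p - q).coeff m = 0 := by
        rw [coeff_sub, ← hdeg, coeff_natDegree, hdeg, ← hqdeg', coeff_natDegree, hqlc,
          sub_self]
      rw [← h'] at hc
      exact (leadingCoeff_ne_zero.mpr h) hc
  exact sub_eq_zero.mp hr

lemma prod_sign {m k : ℕ} (x : ℕ → ℝ) {y : ℝ} (hk : k ≤ m)
    (hlt : ∀ j < k, x j < y) (hgt : ∀ j, k ≤ j → j < m → y < x j) :
    0 < (-1:ℝ)^(m-k) * ∏ i ∈ Finset.range m, (y - x i) := by
  have hsplit : (∏ i ∈ Finset.range m, (y - x i)) =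
      (∏ i ∈ Finset.range k, (y - x i)) * ∏ i ∈ Finset.Ico k m, (y - x i) := by
    rw [Finset.range_eq_Ico, ← Finset.prod_Ico_consecutive _ (Nat.zero_le k) hk,
      ← Finset.range_eq_Ico]
  have h1 : 0 < ∏ i ∈ Finset.range k, (y - x i) :=
    Finset.prod_pos (fun i hi => sub_pos.mpr (hlt i (Finset.mem_range.mp hi)))
  have h2 : (∏ i ∈ Finset.Ico k m, (y - x i)) =
      (-1:ℝ)^(m-k) * ∏ i ∈ Finset.Ico k m, (x i - y) := by
    rw [← Nat.card_Ico k m, ← Finset.prod_const, ← Finset.prod_mul_distrib]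
    exact Finset.prod_congr rfl (fun i _ => by ring)
  have h3 : 0 < ∏ i ∈ Finset.Ico k m, (x i - y) :=
    Finset.prod_pos (fun i hi => by
      have := Finset.mem_Ico.mp hi
      exact sub_pos.mpr (hgt i this.1 this.2))
  have hpow : (-1:ℝ)^(m-k) * (-1:ℝ)^(m-k) = 1 := by
    rw [← pow_add, ← two_mul, pow_mul]; norm_num
  rw [hsplit, h2]
  calc (0:ℝ) < (∏ i ∈ Finset.range k, (y - x i)) * ∏ i ∈ Finset.Ico k m, (x i - y) :=
        mul_pos h1 h3
    _ = (-1:ℝ)^(m-k) * ((∏ i ∈ Finset.range k, (y - x i)) *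
        ((-1:ℝ)^(m-k) * ∏ i ∈ Finset.Ico k m, (x i - y))) := by
      rw [show ∀ a b c : ℝ, a * (b * (a * c)) = (a * a) * (b * c) from fun a b c => by ring,
        hpow, one_mul]

lemma legendre_sign {m : ℕ} (x : ℕ → ℝ)
    (hmono : ∀ i j, i < j → j < m → x i < x j)
    (hroot : ∀ i < m, (legendre m).eval (x i) = 0)
    {y : ℝ} {k : ℕ} (hk : k ≤ m)
    (hlt : ∀ j < k, x j < y) (hgt : ∀ j, k ≤ j → j < m → y < x j) :
    0 < (-1:ℝ)^(m-k) * (legendre m).eval y := by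
  have hfact := eq_prod_of_roots (legendre_ne_zero m) (legendre_natDegree m) x hmono hroot
  have hev : (legendre m).eval y =
      (legendre m).leadingCoeff * ∏ i ∈ Finset.range m, (y - x i) := by
    conv_lhs => rw [hfact]
    simp [eval_prod]
  rw [hev, show (-1:ℝ)^(m-k) * ((legendre m).leadingCoeff * ∏ i ∈ Finset.range m, (y - x i)) =
    (legendre m).leadingCoeff * ((-1:ℝ)^(m-k) * ∏ i ∈ Finset.range m, (y - x i)) from by ring]
  exact mul_pos (legendre_lc_pos m) (prod_sign x hk hlt hgt)

lemma neg_one_pow_add_two (a : ℕ) : (-1:ℝ)^(a+2) = (-1:ℝ)^a := by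
  rw [pow_add]; norm_num

lemma legendre_roots_aux : ∀ m : ℕ, 1 ≤ m → ∃ x : ℕ → ℝ,
    (∀ i j, i < j → j < m → x i < x j) ∧
    (∀ i < m, -1 < x i ∧ x i < 1 ∧ (legendre m).eval (x i) = 0 ∧
      0 < (-1:ℝ)^(m - i) * (legendre (m+1)).eval (x i)) := by
  intro m
  induction m with
  | zero => omega
  | succ m ih =>
    intro _
    by_cases hm0 : m = 0
    · subst hm0
      refine ⟨fun _ => 0, by omega, ?_⟩
      intro i hi
      interval_cases i
      refine ⟨by norm_num, by norm_num, by simp [legendre], ?_⟩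
      have : (legendre 2).eval 0 = -(1/2 : ℝ) := by
        show ((C ((2 * ((0:ℕ) : ℝ) + 3) / (((0:ℕ) : ℝ) + 2)) * X * legendre 1
          - C ((((0:ℕ) : ℝ) + 1) / (((0:ℕ) : ℝ) + 2)) * legendre 0)).eval 0 = _
        norm_num [legendre]
      rw [this]
      norm_num
    have hm1 : 1 ≤ m := by omega
    obtain ⟨x, hxmono, hx⟩ := ih hm1
    have hroot : ∀ i < m, (legendre m).eval (x i) = 0 := fun i hi => (hx i hi).2.2.1
    have hsign : ∀ i < m, 0 < (-1:ℝ)^(m - i) * (legendre (m+1)).eval (x i) :=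
      fun i hi => (hx i hi).2.2.2
    have hbl : ∀ i < m, -1 < x i := fun i hi => (hx i hi).1
    have hbu : ∀ i < m, x i < 1 := fun i hi => (hx i hi).2.1
    set lo : ℕ → ℝ := fun i => if i = 0 then (-1:ℝ) else x (i-1) with hlo
    set hi' : ℕ → ℝ := fun i => if i = m then (1:ℝ) else x i with hhi
    have hex : ∀ i, ∃ t, i ≤ m →
        (lo i < t ∧ t < hi' i ∧ (legendre (m+1)).eval t = 0) := by
      intro i
      by_cases him : i ≤ m
      swap
      · exact ⟨0, fun h => absurd h him⟩
      have key : lo i < hi' i ∧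
          (legendre (m+1)).eval (lo i) * (legendre (m+1)).eval (hi' i) < 0 := by
        by_cases hi0 : i = 0
        · subst hi0
          have hne : (0:ℕ) ≠ m := fun h => hm0 h.symm
          simp only [hlo, hhi, if_pos rfl, if_neg hne]
          constructor
          · exact hbl 0 (by omega)
          · have h1 : 0 < (-1:ℝ)^(m+1) * (legendre (m+1)).eval (-1) := by
              rw [legendre_eval_neg_one]
              rw [← pow_add]
              have : Even (m + 1 + (m + 1)) := ⟨m+1, rfl⟩
              rw [this.neg_one_pow]
              norm_num
            have h2 : 0 < (-1:ℝ)^(m+1+1) * (legendre (m+1)).eval (x 0) := by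
              rw [neg_one_pow_add_two]
              have := hsign 0 (by omega)
              simpa using this
            exact sign_mul_neg h1 h2
        by_cases him' : i = m
        · subst him'
          simp only [hlo, hhi, if_pos rfl, if_neg hi0]
          constructor
          · exact hbu (i-1) (by omega)
          · have h2 : 0 < (-1:ℝ)^(0+1) * (legendre (i+1)).eval (x (i-1)) := by
              have := hsign (i-1) (by omega)
              rwa [show i - (i-1) = 0 + 1 by omega] at this
            have h1 : 0 < (-1:ℝ)^0 * (legendre (i+1)).eval 1 := by
              rw [legendre_eval_one]; norm_num
            have hneg := sign_mul_neg h1 h2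
            nlinarith [hneg]
        · -- middle case : 1 ≤ i < m
          simp only [hlo, hhi, if_neg hi0, if_neg him']
          have hilt : i < m := by omega
          have hi1 : 1 ≤ i := by omega
          constructor
          · exact hxmono (i-1) i (by omega) hilt
          · have h2 : 0 < (-1:ℝ)^((m-i)+1) * (legendre (m+1)).eval (x (i-1)) := by
              have := hsign (i-1) (by omega)
              rwa [show m - (i-1) = (m-i) + 1 by omega] at this
            have h1 : 0 < (-1:ℝ)^(m-i) * (legendre (m+1)).eval (x i) := hsign i hilt
            have := sign_mul_neg h2 (by rwa [show (m-i)+1+1 = (m-i)+2 by omega,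
              neg_one_pow_add_two])
            nlinarith [this]
      obtain ⟨t, ht1, ht2, ht3⟩ := exists_root_between _ key.1 key.2
      exact ⟨t, fun _ => ⟨ht1, ht2, ht3⟩⟩
    choose y hy using hex
    have hyIoo : ∀ i ≤ m, lo i < y i ∧ y i < hi' i ∧ (legendre (m+1)).eval (y i) = 0 :=
      fun i h => hy i h
    refine ⟨y, ?_, ?_⟩
    · intro i j hij hjm
      have hjm' : j ≤ m := by omega
      have him : i ≤ m := by omega
      have h1 : y i < hi' i := (hyIoo i him).2.1
      have h2 : lo j < y j := (hyIoo j hjm').1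
      have hi_ne : i ≠ m := by omega
      have hj_ne : j ≠ 0 := by omega
      rw [hhi] at h1; rw [hlo] at h2
      simp only [if_neg hi_ne] at h1
      simp only [if_neg hj_ne] at h2
      have : x i ≤ x (j-1) := by
        rcases Nat.lt_or_ge i (j-1) with h | h
        · exact (hxmono i (j-1) h (by omega)).le
        · have : i = j - 1 := by omega
          rw [this]
      linarith
    · intro i hi
      have him : i ≤ m := by omega
      obtain ⟨hylo, hyhi, hyroot⟩ := hyIoo i him
      have hbl' : -1 < y i := by
        by_cases h0 : i = 0
        · subst h0; rw [hlo] at hylo; simpa using hylo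
        · rw [hlo] at hylo; simp only [if_neg h0] at hylo
          exact lt_trans (hbl (i-1) (by omega)) hylo
      have hbu' : y i < 1 := by
        by_cases h0 : i = m
        · subst h0; rw [hhi] at hyhi; simpa using hyhi
        · rw [hhi] at hyhi; simp only [if_neg h0] at hyhi
          exact lt_trans hyhi (hbu i (by omega))
      refine ⟨hbl', hbu', hyroot, ?_⟩
      -- sign of legendre (m+2) at y i
      have hsm : 0 < (-1:ℝ)^(m-i) * (legendre m).eval (y i) := by
        apply legendre_sign x hxmono hroot him
        · intro j hj
          have h0 : i ≠ 0 := by omega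
          rw [hlo] at hylo; simp only [if_neg h0] at hylo
          calc x j ≤ x (i-1) := by
                rcases Nat.lt_or_ge j (i-1) with h | h
                · exact (hxmono j (i-1) h (by omega)).le
                · have : j = i - 1 := by omega
                  rw [this]
            _ < y i := hylo
        · intro j hij hjm'
          have h0 : i ≠ m := by omega
          rw [hhi] at hyhi; simp only [if_neg h0] at hyhi
          calc y i < x i := hyhi
            _ ≤ x j := by
              rcases Nat.lt_or_ge i j with h | h
              · exact (hxmono i j h hjm').le
              · have : i = j := by omega
                rw [this]
      have heq : ((m:ℝ)+2) * (legendre (m+2)).eval (y i)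
          = -(((m:ℝ)+1) * (legendre m).eval (y i)) := by
        have := congrArg (eval (y i)) (legendre_rec m)
        simp only [eval_mul, eval_sub, eval_add, eval_C, eval_X, hyroot] at this
        linarith [this]
      have h2 : ((m:ℝ)+1) * ((-1:ℝ)^(m-i) * (legendre m).eval (y i))
          = ((m:ℝ)+2) * ((-1:ℝ)^((m-i)+1) * (legendre (m+2)).eval (y i)) := by
        rw [pow_succ]
        linear_combination ((-1:ℝ)^(m-i)) * heq
      have h3 : 0 < ((m:ℝ)+2) * ((-1:ℝ)^((m-i)+1) * (legendre (m+2)).eval (y i)) := by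
        rw [← h2]
        exact mul_pos (by positivity) hsm
      have h4 : 0 < (-1:ℝ)^((m-i)+1) * (legendre (m+2)).eval (y i) := by
        have hd := div_pos h3 (show (0:ℝ) < (m:ℝ)+2 by positivity)
        rwa [mul_div_cancel_left₀ _ (show ((m:ℝ)+2) ≠ 0 by positivity)] at hd
      rwa [show m + 1 - i = (m - i) + 1 by omega]

theorem stmt_17 (N : ℕ) (hN : 2 ≤ N) (u uN : Polynomial ℝ)
    (hu : u.natDegree ≤ N + 1) (huN : uN.natDegree ≤ N)
    (hinit : uN.eval (-1) = u.eval (-1))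
    (hcol : ∀ x : ℝ, (legendre N).eval x = 0 →
      (derivative uN).eval x = (derivative u).eval x) :
    ∃ c : ℝ, ∀ x : ℝ,
      u.eval x - uN.eval x =
          c * ((legendre (N + 1)).eval x - (legendre (N - 1)).eval x) / (2 * (N : ℝ) + 1) ∧
      u.eval x - uN.eval x =
          c * (x ^ 2 - 1) * (derivative (legendre N)).eval x / ((N : ℝ) * ((N : ℝ) + 1)) := by
  obtain ⟨M, rfl⟩ : ∃ M : ℕ, N = M + 2 := ⟨N - 2, by omega⟩
  obtain ⟨x, hxmono, hx⟩ := legendre_roots_aux (M+2) (by omega)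
  set e : Polynomial ℝ := u - uN with he
  have hedeg : (derivative e).natDegree ≤ M + 2 := by
    have h1 : e.natDegree ≤ M + 3 := le_trans (natDegree_sub_le u uN) (by omega)
    have := natDegree_derivative_le e
    omega
  have heroot : ∀ i < M + 2, (derivative e).eval (x i) = 0 := by
    intro i hi
    rw [he, derivative_sub, eval_sub, hcol (x i) (hx i hi).2.2.1]
    ring
  set lc : ℝ := (legendre (M+2)).leadingCoeff with hlc
  have hlcne : lc ≠ 0 := (legendre_lc_pos (M+2)).ne'
  set c0 : ℝ := (derivative e).coeff (M+2) / lc with hc0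
  set d : Polynomial ℝ := derivative e - C c0 * legendre (M+2) with hd
  have hdcoeff : d.coeff (M+2) = 0 := by
    have h1 := coeff_natDegree (p := legendre (M+2))
    rw [legendre_natDegree] at h1
    rw [hd, coeff_sub, coeff_C_mul, h1, ← hlc, hc0, div_mul_cancel₀ _ hlcne, sub_self]
  have hdroot : ∀ i < M + 2, d.eval (x i) = 0 := by
    intro i hi
    rw [hd, eval_sub, eval_mul, heroot i hi, (hx i hi).2.2.1, mul_zero, sub_zero]
  have hinj : Set.InjOn x (Finset.range (M+2) : Set ℕ) := by
    intro i hi j hj hij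
    by_contra hne
    rcases lt_or_gt_of_ne hne with h | h
    · exact absurd hij (hxmono i j h (by simpa using hj)).ne
    · exact absurd hij.symm (hxmono j i h (by simpa using hi)).ne
  have hdzero : d = 0 := by
    rcases eq_or_ne d 0 with h | h
    · exact h
    apply eq_zero_of_natDegree_lt_card_of_eval_eq_zero' _ ((Finset.range (M+2)).image x)
    · intro t ht
      obtain ⟨i, hi, rfl⟩ := Finset.mem_image.mp ht
      exact hdroot i (Finset.mem_range.mp hi)
    · rw [Finset.card_image_of_injOn (by simpa using hinj), Finset.card_range]
      have hdle : d.natDegree ≤ M + 2 := by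
        rw [hd]
        refine le_trans (natDegree_sub_le _ _) (max_le hedeg ?_)
        exact le_trans (natDegree_C_mul_le _ _) (le_of_eq (legendre_natDegree (M+2)))
      rcases hdle.lt_or_eq with h' | h'
      · exact h'
      exfalso
      rw [← h'] at hdcoeff
      exact (leadingCoeff_ne_zero.mpr h) hdcoeff
  have hder : derivative e = C c0 * legendre (M+2) := by
    have := sub_eq_zero.mp hdzero
    exact this
  set G : Polynomial ℝ := C (c0 / (2*(M:ℝ)+5)) * (legendre (M+3) - legendre (M+1)) with hG
  have h5ne : (2*(M:ℝ)+5) ≠ 0 := by positivity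
  have hdd : derivative (legendre (M+3)) - derivative (legendre (M+1))
      = C (2*(M:ℝ)+5) * legendre (M+2) := by
    have h := legendre_deriv_diff (M+1)
    push_cast at h
    rw [show (2*((M:ℝ)+1)+3) = 2*(M:ℝ)+5 by ring] at h
    exact h
  have hGder : derivative G = derivative e := by
    rw [hG, derivative_C_mul, derivative_sub, hdd, hder, ← mul_assoc, ← map_mul,
      div_mul_cancel₀ _ h5ne]
  have hconst : e - G = C ((e - G).coeff 0) :=
    eq_C_of_derivative_eq_zero (by rw [derivative_sub, hGder, sub_self])
  have heG : e = G := by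
    have hev := congrArg (eval (-1)) hconst
    have hG1 : G.eval (-1) = 0 := by
      rw [hG, eval_mul, eval_C, eval_sub, legendre_eval_neg_one, legendre_eval_neg_one,
        show (-1:ℝ)^(M+3) = (-1:ℝ)^(M+1) from neg_one_pow_add_two (M+1), sub_self, mul_zero]
    have he1 : e.eval (-1) = 0 := by rw [he, eval_sub, hinit, sub_self]
    rw [eval_sub, hG1, he1, eval_C, sub_zero] at hev
    have : e - G = 0 := by rw [hconst, ← hev, map_zero]
    exact sub_eq_zero.mp this
  refine ⟨c0, fun t => ?_⟩
  have hval : u.eval t - uN.eval t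
      = c0 / (2*(M:ℝ)+5) * ((legendre (M+3)).eval t - (legendre (M+1)).eval t) := by
    have := congrArg (eval t) heG
    rw [he, hG] at this
    simpa [eval_sub, eval_mul, eval_C] using this
  have hcast : ((M+2:ℕ) : ℝ) = (M:ℝ) + 2 := by push_cast; ring
  constructor
  · rw [show (M+2+1) = M+3 from rfl, show (M+2-1) = M+1 from rfl, hval, hcast]
    ring
  · have hxsq := legendre_xsq (M+1)
    have hx2 := congrArg (eval t) hxsq
    push_cast at hx2
    simp only [eval_mul, eval_C, eval_sub, eval_pow, eval_X, eval_one] at hx2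
    rw [hval, hcast]
    have hne1 : ((M:ℝ)+2) ≠ 0 := by positivity
    have hne2 : ((M:ℝ)+3) ≠ 0 := by positivity
    rw [show (2*((M:ℝ)+1)+3) = 2*(M:ℝ)+5 by ring] at hx2
    field_simp
    linear_combination (-c0) * hx2
end

section
/- Let N ≥ 2 and let u ∈ P_{N+1} and u_N ∈ P_N be real polynomials with u_N(-1) = u(-1) and u_N' agreeing with u' at the N roots of the Chebyshev polynomial T_N. Then there exists a constant c such that u(x) - u_N(x) = c·[ (N/(N²-1))·(x²-1)·U_{N-1}(x) - (x·T_N(x) + (-1)^N)/(N²-1) ] for all x. -/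
open Polynomial Polynomial.Chebyshev

lemma T_natDegree_le' (n : ℕ) : (T ℝ (n : ℤ)).natDegree ≤ n := by
  induction n using Nat.twoStepInduction with
  | zero => simp [T_zero]
  | one => simp [T_one]
  | more n ih1 ih2 =>
    have h : ((n + 2 : ℕ) : ℤ) = (n : ℤ) + 2 := by push_cast; ring
    rw [h, T_add_two]
    refine (natDegree_sub_le _ _).trans (max_le ?_ ?_)
    · refine (natDegree_mul_le).trans ?_
      have h1 : ((n + 1 : ℕ) : ℤ) = (n : ℤ) + 1 := by push_cast; ring
      have := h1 ▸ ih2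
      have h2 : ((2 : ℝ[X]) * X).natDegree ≤ 1 := by
        refine natDegree_mul_le.trans ?_
        simp
      omega
    · omega

lemma T_coeff' (n : ℕ) : (T ℝ ((n : ℤ) + 1)).coeff (n + 1) = 2 ^ n := by
  induction n using Nat.twoStepInduction with
  | zero => simp [T_one]
  | one =>
    have : ((1 : ℕ) : ℤ) + 1 = 2 := by norm_num
    rw [this, T_two]
    have h2 : (2 : ℝ[X]) = C 2 := (map_ofNat Polynomial.C 2).symm
    rw [h2]
    simp [coeff_sub, coeff_C_mul, coeff_X_pow, coeff_one]
  | more n ih1 ih2 =>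
    have h : ((n + 2 : ℕ) : ℤ) + 1 = ((n : ℤ) + 1) + 2 := by push_cast; ring
    rw [h, T_add_two]
    have e1 : ((n : ℤ) + 1) + 1 = ((n + 1 : ℕ) : ℤ) + 1 := by push_cast; ring
    have h2 : (2 : ℝ[X]) * X * T ℝ ((n : ℤ) + 1 + 1) = C 2 * (X * T ℝ ((n : ℤ) + 1 + 1)) := by
      rw [mul_assoc, map_ofNat]
    rw [coeff_sub, h2, coeff_C_mul, show n + 2 + 1 = (n + 2) + 1 from rfl, coeff_X_mul]
    rw [e1, ih2]
    have hdeg : (T ℝ ((n : ℤ) + 1)).natDegree ≤ n + 1 := by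
      have := T_natDegree_le' (n + 1)
      have hc : ((n + 1 : ℕ) : ℤ) = (n : ℤ) + 1 := by push_cast; ring
      rwa [hc] at this
    rw [coeff_eq_zero_of_natDegree_lt (by omega)]
    ring

lemma T_eval_neg_one' (n : ℕ) : (T ℝ (n : ℤ)).eval (-1) = (-1 : ℝ) ^ n := by
  rw [← Real.cos_pi, Polynomial.Chebyshev.T_real_cos]
  have := Real.cos_nat_mul_pi_sub 0 n
  simpa using this

theorem stmt_19 (N : ℕ) (hN : 2 ≤ N) (u uN : Polynomial ℝ)
    (hu : u.natDegree ≤ N + 1) (huN : uN.natDegree ≤ N)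
    (hinit : uN.eval (-1) = u.eval (-1))
    (hcol : ∀ x : ℝ, (T ℝ N).eval x = 0 →
      (derivative uN).eval x = (derivative u).eval x) :
    ∃ c : ℝ, ∀ x : ℝ,
      u.eval x - uN.eval x =
        c * (((N : ℝ) / ((N : ℝ) ^ 2 - 1)) * (x ^ 2 - 1) * (U ℝ ((N : ℤ) - 1)).eval x
          - (x * (T ℝ N).eval x + (-1 : ℝ) ^ N) / ((N : ℝ) ^ 2 - 1)) := by
  have hN2 : (2 : ℝ) ≤ (N : ℝ) := by exact_mod_cast hN
  have hNpos : (0 : ℝ) < N := by linarith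
  have hs : ((N : ℝ) ^ 2 - 1) ≠ 0 := by nlinarith
  have hπ := Real.pi_pos
  -- the collocation points
  set f : Fin N → ℝ := fun k => Real.cos ((2 * k + 1) * Real.pi / (2 * N)) with hf
  have hθmem : ∀ k : Fin N, (2 * (k : ℝ) + 1) * Real.pi / (2 * N) ∈ Set.Icc 0 Real.pi := by
    intro k
    constructor
    · positivity
    · rw [div_le_iff₀ (by positivity)]
      have hk : (k : ℝ) ≤ (N : ℝ) - 1 := by
        have := k.isLt
        have : (k : ℝ) + 1 ≤ (N : ℝ) := by exact_mod_cast this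
        linarith
      nlinarith
  have hfroot : ∀ k : Fin N, (T ℝ (N : ℤ)).eval (f k) = 0 := by
    intro k
    rw [hf]
    simp only
    rw [Polynomial.Chebyshev.T_real_cos]
    have harg : ((N : ℤ) : ℝ) * ((2 * (k : ℝ) + 1) * Real.pi / (2 * N)) =
        (k : ℝ) * Real.pi + Real.pi / 2 := by
      push_cast
      field_simp
    rw [harg, Real.cos_add, Real.cos_pi_div_two, Real.sin_pi_div_two, Real.sin_nat_mul_pi]
    ring
  have hfinj : Function.Injective f := by
    intro j k hjk
    have heq := Real.injOn_cos (hθmem j) (hθmem k) hjk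
    have hne : Real.pi / (2 * (N : ℝ)) ≠ 0 := by positivity
    have h2 : (2 * (j : ℝ) + 1) = 2 * (k : ℝ) + 1 := by
      have hj : (2 * (j : ℝ) + 1) * Real.pi / (2 * N) =
          (2 * (j : ℝ) + 1) * (Real.pi / (2 * N)) := by ring
      have hk : (2 * (k : ℝ) + 1) * Real.pi / (2 * N) =
          (2 * (k : ℝ) + 1) * (Real.pi / (2 * N)) := by ring
      rw [hj, hk] at heq
      exact mul_right_cancel₀ hne heq
    have hjk' : (j : ℕ) = (k : ℕ) := by
      have : (j : ℝ) = (k : ℝ) := by linarith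
      exact_mod_cast this
    exact Fin.ext hjk'
  -- the difference derivative
  set d : ℝ[X] := derivative (u - uN) with hd
  have hdeg : d.natDegree ≤ N := by
    rw [hd]
    have h1 : (u - uN).natDegree ≤ N + 1 :=
      (natDegree_sub_le _ _).trans (max_le hu (huN.trans (Nat.le_succ N)))
    have := natDegree_derivative_le (u - uN)
    omega
  have hdroot : ∀ k : Fin N, d.eval (f k) = 0 := by
    intro k
    rw [hd, derivative_sub, eval_sub, hcol (f k) (hfroot k)]
    ring
  -- T's leading coefficient
  have hTN1 : (1 : ℕ) ≤ N := by omega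
  have hTcoeff : (T ℝ (N : ℤ)).coeff N = 2 ^ (N - 1) := by
    have := T_coeff' (N - 1)
    have hc : ((N - 1 : ℕ) : ℤ) + 1 = (N : ℤ) := by
      push_cast [Nat.cast_sub hTN1]; ring
    have hn : (N - 1) + 1 = N := by omega
    rwa [hc, hn] at this
  have hTdeg : (T ℝ (N : ℤ)).natDegree ≤ N := T_natDegree_le' N
  set c0 : ℝ := d.coeff N / (2 ^ (N - 1) : ℝ) with hc0
  have hq : d - C c0 * T ℝ (N : ℤ) = 0 := by
    set q : ℝ[X] := d - C c0 * T ℝ (N : ℤ) with hqdef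
    have hqle : q.natDegree ≤ N := by
      refine (natDegree_sub_le _ _).trans (max_le hdeg ?_)
      refine natDegree_mul_le.trans ?_
      simp [hTdeg]
    have hqN : q.coeff N = 0 := by
      rw [hqdef, coeff_sub, coeff_C_mul, hTcoeff, hc0,
        div_mul_cancel₀ _ (by positivity : (2 : ℝ) ^ (N - 1) ≠ 0)]
      ring
    by_cases hq0 : q = 0
    · exact hq0
    have hqlt : q.natDegree < N := by
      rcases lt_or_eq_of_le hqle with h | h
      · exact h
      · exfalso
        apply hq0
        have : q.leadingCoeff = 0 := by rw [leadingCoeff, h, hqN]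
        exact leadingCoeff_eq_zero.mp this
    refine eq_zero_of_natDegree_lt_card_of_eval_eq_zero q hfinj (fun k => ?_) ?_
    · rw [hqdef]
      simp [hdroot k, hfroot k]
    · simpa [Fintype.card_fin] using hqlt
  have hD : derivative (u - uN) = C c0 * T ℝ (N : ℤ) := by
    rw [← hd]; linear_combination hq
  -- the explicit antiderivative
  set H : ℝ[X] := C (N : ℝ) * (T ℝ ((N : ℤ) + 1) - X * T ℝ (N : ℤ)) -
      (X * T ℝ (N : ℤ) + C ((-1 : ℝ) ^ N)) with hH
  have hcast : (((N : ℤ) : ℝ[X])) = C (N : ℝ) := by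
    push_cast
    rw [C_eq_natCast]
  have hdT1 : derivative (T ℝ ((N : ℤ) + 1)) = (C (N : ℝ) + 1) * U ℝ (N : ℤ) := by
    have h := T_derivative_eq_U (R := ℝ) ((N : ℤ) + 1)
    rw [show (N : ℤ) + 1 - 1 = (N : ℤ) by ring] at h
    rw [h]
    push_cast
    rw [C_eq_natCast]
  have hdT : derivative (T ℝ (N : ℤ)) = C (N : ℝ) * U ℝ ((N : ℤ) - 1) := by
    have h := T_derivative_eq_U (R := ℝ) (N : ℤ)
    rw [h, hcast]
  have hXU : X * U ℝ ((N : ℤ) - 1) = U ℝ (N : ℤ) - T ℝ (N : ℤ) := by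
    have := U_eq_X_mul_U_add_T (R := ℝ) ((N : ℤ) - 1)
    rw [show (N : ℤ) - 1 + 1 = (N : ℤ) by ring] at this
    linear_combination -this
  have hH' : derivative H = C ((N : ℝ) ^ 2 - 1) * T ℝ (N : ℤ) := by
    have hC2 : C ((N : ℝ) ^ 2 - 1) = C (N : ℝ) ^ 2 - 1 := by
      rw [map_sub, map_pow, map_one]
    rw [hH]
    simp only [derivative_sub, derivative_mul, derivative_add, derivative_C, derivative_X,
      hdT1, hdT]
    rw [hC2]
    linear_combination (- C ((N : ℝ)) ^ 2 - C ((N : ℝ))) * hXU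
  -- boundary value
  have hTm1 : (T ℝ (N : ℤ)).eval (-1) = (-1 : ℝ) ^ N := T_eval_neg_one' N
  have hTm1' : (T ℝ ((N : ℤ) + 1)).eval (-1) = (-1 : ℝ) ^ (N + 1) := by
    have := T_eval_neg_one' (N + 1)
    rwa [show ((N + 1 : ℕ) : ℤ) = (N : ℤ) + 1 by push_cast; ring] at this
  have hHm1 : H.eval (-1) = 0 := by
    rw [hH]
    simp only [eval_sub, eval_mul, eval_add, eval_C, eval_X, hTm1, hTm1']
    rw [pow_succ]
    ring
  -- conclude u - uN = (c0/s) * H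
  set p : ℝ[X] := u - uN - C (c0 / ((N : ℝ) ^ 2 - 1)) * H with hp
  have hp' : derivative p = 0 := by
    rw [hp, derivative_sub, hD, derivative_mul, derivative_C, hH', zero_mul, zero_add,
      ← mul_assoc, ← Polynomial.C_mul, div_mul_cancel₀ _ hs]
    ring
  have hpc : p = C (p.coeff 0) := eq_C_of_derivative_eq_zero hp'
  have hpm1 : p.eval (-1) = 0 := by
    rw [hp]
    simp [hHm1, hinit]
  have hp0 : p = 0 := by
    rw [hpc] at hpm1 ⊢
    rw [eval_C] at hpm1
    rw [hpm1, map_zero]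
  have key : u - uN = C (c0 / ((N : ℝ) ^ 2 - 1)) * H := by
    rw [hp] at hp0
    exact sub_eq_zero.mp hp0
  refine ⟨c0, fun x => ?_⟩
  have hx := congrArg (eval x) key
  rw [eval_sub, eval_mul, eval_C] at hx
  rw [hx]
  have hU : (x ^ 2 - 1) * (U ℝ ((N : ℤ) - 1)).eval x =
      (T ℝ ((N : ℤ) + 1)).eval x - x * (T ℝ (N : ℤ)).eval x := by
    have h := T_eq_X_mul_T_sub_pol_U (R := ℝ) ((N : ℤ) - 1)
    rw [show (N : ℤ) - 1 + 2 = (N : ℤ) + 1 by ring,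
      show (N : ℤ) - 1 + 1 = (N : ℤ) by ring] at h
    have hvx := congrArg (eval x) h
    simp only [eval_sub, eval_mul, eval_one, eval_pow, eval_X] at hvx
    linear_combination -hvx
  rw [hH]
  simp only [eval_sub, eval_mul, eval_add, eval_C, eval_X]
  linear_combination (-(c0 * (N : ℝ) / ((N : ℝ) ^ 2 - 1))) * hU
end
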